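/- Let w be an infinite binary word. If there exists C such that every factor of w of length at least C is weakly abelian bordered, then w is bounded weakly abelian periodic: there exist a prefix u, a rational r ∈ [0,1], and a bound B such that w = u v₁ v₂ v₃ ⋯ with each vᵢ non-empty of length at most B and ρ₁(vᵢ) = r for all i. -/

import Mathlib

def factor {α : Type*} (w : ℕ → α) (i n : ℕ) : List α :=
  (List.range n).map (fun k => w (i + k))

def SameFreq {α : Type*} [DecidableEq α] (u v : List α) : Prop :=
  ∀ a : α, (u.count a : ℚ) / u.length = (v.count a : ℚ) / v.length

def WeaklyAbelianBordered {α : Type*} [DecidableEq α] (w : List α) : Prop :=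
  ∃ p s : List α, p <+: w ∧ s <:+ w ∧ p ≠ [] ∧ p.length < w.length ∧
    s ≠ [] ∧ s.length < w.length ∧ SameFreq p s

namespace Stmt7Aux

/-- number of `true`s in the factor of length `n` starting at `i` -/
def cnt (w : ℕ → Bool) (i n : ℕ) : ℕ := (factor w i n).count true

lemma factor_length (w : ℕ → Bool) (i n : ℕ) : (factor w i n).length = n := by
  simp [factor]

lemma factor_append (w : ℕ → Bool) (i a b : ℕ) :
    factor w i (a + b) = factor w i a ++ factor w (i + a) b := by
  unfold factor
  rw [List.range_add, List.map_append, List.map_map]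
  congr 1
  apply List.map_congr_left
  intro k _
  simp [Function.comp, Nat.add_assoc]

lemma cnt_add (w : ℕ → Bool) (i a b : ℕ) :
    cnt w i (a + b) = cnt w i a + cnt w (i + a) b := by
  unfold cnt
  rw [factor_append, List.count_append]

lemma cnt_le (w : ℕ → Bool) (i n : ℕ) : cnt w i n ≤ n := by
  have : (factor w i n).count true ≤ (factor w i n).length := List.count_le_length
  rwa [factor_length] at this

/-- slp (frequency of `true`) of the factor of length `n` starting at `i` -/
def slp (w : ℕ → Bool) (i n : ℕ) : ℚ := (cnt w i n : ℚ) / n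

lemma step_ex (w : ℕ → Bool) (D u : ℕ) : ∃ m, m ∈ Finset.Icc 1 (2*D+2) ∧
    ∀ m' ∈ Finset.Icc 1 (2*D+2), slp w u m ≤ slp w u m' :=
  Finset.exists_min_image _ _ ⟨1, by rw [Finset.mem_Icc]; omega⟩

open Classical in
/-- the first `m ∈ [1, 2D+2]` minimizing the slp of the factor `w[u, u+m)` -/
noncomputable def step (w : ℕ → Bool) (D u : ℕ) : ℕ := Nat.find (step_ex w D u)

open Classical in
lemma step_mem (w : ℕ → Bool) (D u : ℕ) : step w D u ∈ Finset.Icc 1 (2*D+2) :=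
  (Nat.find_spec (step_ex w D u)).1

lemma step_pos (w : ℕ → Bool) (D u : ℕ) : 1 ≤ step w D u := by
  have := step_mem w D u; rw [Finset.mem_Icc] at this; omega

lemma step_le (w : ℕ → Bool) (D u : ℕ) : step w D u ≤ 2*D+2 := by
  have := step_mem w D u; rw [Finset.mem_Icc] at this; omega

open Classical in
lemma step_min (w : ℕ → Bool) (D u : ℕ) :
    ∀ m' ∈ Finset.Icc 1 (2*D+2), slp w u (step w D u) ≤ slp w u m' :=
  (Nat.find_spec (step_ex w D u)).2

open Classical in
lemma step_first (w : ℕ → Bool) (D u m : ℕ) (h1 : 1 ≤ m) (h2 : m < step w D u) :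
    slp w u (step w D u) < slp w u m := by
  have hmem : m ∈ Finset.Icc 1 (2*D+2) := by
    have := step_le w D u; rw [Finset.mem_Icc]; omega
  have hnot := Nat.find_min (step_ex w D u) h2
  push_neg at hnot
  obtain ⟨m', hm', hlt⟩ := hnot hmem
  exact lt_of_le_of_lt (step_min w D u m' hm') hlt

/-- breakpoints -/
noncomputable def pt (w : ℕ → Bool) (D : ℕ) : ℕ → ℕ
  | 0 => 0
  | j+1 => pt w D j + step w D (pt w D j)

/-- The key lemma: if a step had length `≥ D ≥ C`, the corresponding factor would be
weakly abelian unbordered: every proper prefix has slp strictly greater than the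
whole factor's slp (by minimality and firstness of the step), hence every proper
suffix has slp strictly smaller; this contradicts the hypothesis. -/
lemma step_lt (w : ℕ → Bool) (C : ℕ)
    (h : ∀ i n, C ≤ n → WeaklyAbelianBordered (factor w i n)) (D : ℕ)
    (hCD : C ≤ D) (hD2 : 2 ≤ D) (u : ℕ) : step w D u < D := by
  by_contra hge
  push_neg at hge
  obtain ⟨p, s, hp, hs, hpne, hplen, hsne, hslen, hfreq⟩ :=
    h u (step w D u) (le_trans hCD hge)
  set d := step w D u with hd
  rw [factor_length] at hplen hslen
  have hx1 : 1 ≤ p.length := List.length_pos_iff.mpr hpne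
  have hy1 : 1 ≤ s.length := List.length_pos_iff.mpr hsne
  set x := p.length with hx
  set y := s.length with hy
  -- identify the prefix
  obtain ⟨t, ht⟩ := hp
  have hsplit : factor w u d = factor w u x ++ factor w (u + x) (d - x) := by
    rw [← factor_append]; congr 1; omega
  have hpx : p = factor w u x :=
    (List.append_inj (ht.trans hsplit) (by rw [factor_length])).1
  -- identify the suffix
  obtain ⟨t', ht'⟩ := hs
  have hsplit2 : factor w u d = factor w u (d - y) ++ factor w (u + (d - y)) y := by
    rw [← factor_append]; congr 1; omega
  have htlen : t'.length = d - y := by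
    have := congrArg List.length ht'
    rw [List.length_append, factor_length] at this
    omega
  have hsy : s = factor w (u + (d - y)) y :=
    (List.append_inj (ht'.trans hsplit2) (by rw [htlen, factor_length])).2
  -- the frequency equation from the weak abelian border
  have hfr := hfreq true
  rw [hpx, hsy, factor_length, factor_length] at hfr
  -- slp inequalities from minimality/firstness of the step
  have hax := step_first w D u x hx1 (by omega)
  have hey := step_first w D u (d - y) (by omega) (by omega)
  have hdpos : (0:ℚ) < (d:ℚ) := by
    have : 0 < d := by omega
    exact_mod_cast this
  have hxpos : (0:ℚ) < (x:ℚ) := by exact_mod_cast hx1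
  have hypos : (0:ℚ) < (y:ℚ) := by exact_mod_cast hy1
  have hy'pos : (0:ℚ) < ((d - y : ℕ):ℚ) := by
    have : 1 ≤ d - y := by omega
    exact_mod_cast this
  rw [slp, slp, div_lt_div_iff₀ hdpos hxpos] at hax
  rw [slp, slp, div_lt_div_iff₀ hdpos hy'pos] at hey
  -- counts add up
  have hAeb : (cnt w u d : ℚ) = (cnt w u (d - y) : ℚ) + (cnt w (u + (d - y)) y : ℚ) := by
    have h0 : cnt w u ((d - y) + y) = cnt w u (d - y) + cnt w (u + (d - y)) y :=
      cnt_add w u (d - y) y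
    rw [show (d - y) + y = d by omega] at h0
    exact_mod_cast h0
  have hdsum : (d:ℚ) = ((d - y : ℕ):ℚ) + (y:ℚ) := by
    have : d = (d - y) + y := by omega
    exact_mod_cast this
  -- suffix slp is strictly below the whole slp
  have hbd : (cnt w (u + (d - y)) y : ℚ) * d < (cnt w u d : ℚ) * y := by
    rw [hAeb, hdsum] at hey ⊢
    ring_nf at hey ⊢
    linarith
  have hby : (cnt w (u + (d - y)) y : ℚ) / y < (cnt w u d : ℚ) / d :=
    (div_lt_div_iff₀ hypos hdpos).mpr hbd
  have hax' : (cnt w u d : ℚ) / d < (cnt w u x : ℚ) / x :=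
    (div_lt_div_iff₀ hdpos hxpos).mpr hax
  simp only [cnt] at hby hax'
  linarith [hfr, hby, hax']

lemma sigma_mono (w : ℕ → Bool) (C : ℕ)
    (h : ∀ i n, C ≤ n → WeaklyAbelianBordered (factor w i n)) (D : ℕ)
    (hCD : C ≤ D) (hD2 : 2 ≤ D) (j : ℕ) :
    slp w (pt w D j) (step w D (pt w D j))
      ≤ slp w (pt w D (j+1)) (step w D (pt w D (j+1))) := by
  set u := pt w D j with hu
  have hpt1 : pt w D (j+1) = u + step w D u := rfl
  set d1 := step w D u with hd1
  set d2 := step w D (u + d1) with hd2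
  have h1 : d1 < D := step_lt w C h D hCD hD2 u
  have h2 : d2 < D := step_lt w C h D hCD hD2 (u + d1)
  have h1p : 1 ≤ d1 := step_pos w D u
  have h2p : 1 ≤ d2 := step_pos w D (u + d1)
  have hmem : d1 + d2 ∈ Finset.Icc 1 (2*D+2) := by rw [Finset.mem_Icc]; omega
  have hmin := step_min w D u (d1 + d2) hmem
  have hcnt : cnt w u (d1 + d2) = cnt w u d1 + cnt w (u + d1) d2 := cnt_add w u d1 d2
  rw [hpt1, ← hd2]
  set c1 := cnt w u d1 with hc1
  set c2 := cnt w (u + d1) d2 with hc2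
  have h1q : (0:ℚ) < (d1:ℚ) := by exact_mod_cast h1p
  have h2q : (0:ℚ) < (d2:ℚ) := by exact_mod_cast h2p
  have hsq : (0:ℚ) < ((d1 + d2 : ℕ):ℚ) := by exact_mod_cast Nat.lt_of_lt_of_le Nat.zero_lt_one (by omega)
  rw [slp, slp, hcnt, div_le_div_iff₀ h1q hsq] at hmin
  rw [slp, slp, div_le_div_iff₀ h1q h2q]
  push_cast at hmin ⊢
  nlinarith [hmin]

lemma ev_const (L : ℕ) (z : ℕ → ℕ) (mono : Monotone z) (bdd : ∀ j, z j ≤ L) :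
    ∃ J, ∀ j, J ≤ j → z j = z J := by
  by_contra hc
  push_neg at hc
  have key : ∀ m, ∃ j, m ≤ z j := by
    intro m
    induction m with
    | zero => exact ⟨0, Nat.zero_le _⟩
    | succ m ih =>
      obtain ⟨j, hj⟩ := ih
      obtain ⟨j', hj', hne⟩ := hc j
      have := mono hj'
      exact ⟨j', by omega⟩
  obtain ⟨j, hj⟩ := key (L+1)
  have := bdd j
  omega

end Stmt7Aux

open Stmt7Aux in
/-- If every factor of length at least `C` of an infinite binary word `w` is weakly abelian
bordered, then `w` is bounded weakly abelian periodic: after a finite prefix, `w` factors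
into non-empty blocks of uniformly bounded length all having frequency `r ∈ [0,1] ∩ ℚ`
of the letter `1`. The blocks are the factors between the breakpoints `k i`. -/
theorem stmt_7 (w : ℕ → Bool)
    (h : ∃ C : ℕ, ∀ i n, C ≤ n → WeaklyAbelianBordered (factor w i n)) :
    ∃ (r : ℚ) (B : ℕ) (k : ℕ → ℕ), 0 ≤ r ∧ r ≤ 1 ∧ StrictMono k ∧
      (∀ i, k (i + 1) - k i ≤ B) ∧
      (∀ i, ((factor w (k i) (k (i + 1) - k i)).count true : ℚ)
              / (k (i + 1) - k i) = r) := by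
  obtain ⟨C, h⟩ := h
  set D := C + 2 with hD
  have hCD : C ≤ D := by omega
  have hD2 : 2 ≤ D := by omega
  have hstep_lt : ∀ u, step w D u < D := step_lt w C h D hCD hD2
  -- the integer rescaled slopes
  set L := Nat.factorial (D - 1) with hL
  have hLpos : 0 < L := Nat.factorial_pos _
  set z : ℕ → ℕ := fun j => cnt w (pt w D j) (step w D (pt w D j)) * (L / step w D (pt w D j))
    with hz
  have hdvd : ∀ j, step w D (pt w D j) ∣ L := fun j =>
    Nat.dvd_factorial (step_pos w D (pt w D j)) (by have := hstep_lt (pt w D j); omega)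
  have hzq : ∀ j, (z j : ℚ) = slp w (pt w D j) (step w D (pt w D j)) * L := by
    intro j
    have hp := step_pos w D (pt w D j)
    have hdne : ((step w D (pt w D j)) : ℚ) ≠ 0 := by
      have h0 : (0:ℚ) < ((step w D (pt w D j)):ℚ) := by exact_mod_cast hp
      exact ne_of_gt h0
    have hcast : ((L / step w D (pt w D j) : ℕ) : ℚ) = (L:ℚ) / ((step w D (pt w D j)):ℚ) :=
      Nat.cast_div (hdvd j) hdne
    show ((cnt w (pt w D j) (step w D (pt w D j)) * (L / step w D (pt w D j)) : ℕ) : ℚ) = _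
    push_cast [hcast]
    rw [slp]
    field_simp
  -- z is monotone and bounded, hence eventually constant
  have hsig : ∀ j, 0 ≤ slp w (pt w D j) (step w D (pt w D j)) ∧
      slp w (pt w D j) (step w D (pt w D j)) ≤ 1 := by
    intro j
    constructor
    · rw [slp]; positivity
    · rw [slp]
      have hle := cnt_le w (pt w D j) (step w D (pt w D j))
      have hp := step_pos w D (pt w D j)
      rw [div_le_one (by exact_mod_cast hp)]
      exact_mod_cast hle
  have hmonos : Monotone (fun j => slp w (pt w D j) (step w D (pt w D j))) :=
    monotone_nat_of_le_succ (fun j => sigma_mono w C h D hCD hD2 j)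
  have hzmono : Monotone z := by
    intro i j hij
    have : (z i : ℚ) ≤ (z j : ℚ) := by
      rw [hzq i, hzq j]
      have := hmonos hij
      have hL0 : (0:ℚ) ≤ (L:ℚ) := by positivity
      exact mul_le_mul_of_nonneg_right this hL0
    exact_mod_cast this
  have hzbdd : ∀ j, z j ≤ L := by
    intro j
    have : (z j : ℚ) ≤ (L : ℚ) := by
      rw [hzq j]
      have := (hsig j).2
      have := (hsig j).1
      nlinarith [(hsig j).1, (hsig j).2, show (0:ℚ) ≤ (L:ℚ) by positivity]
    exact_mod_cast this
  obtain ⟨J, hJ⟩ := ev_const L z hzmono hzbdd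
  -- slopes are eventually constant
  have hsconst : ∀ j, J ≤ j →
      slp w (pt w D j) (step w D (pt w D j)) = slp w (pt w D J) (step w D (pt w D J)) := by
    intro j hj
    have hzz : (z j : ℚ) = (z J : ℚ) := by exact_mod_cast hJ j hj
    rw [hzq j, hzq J] at hzz
    have hLne : (L:ℚ) ≠ 0 := by positivity
    exact mul_right_cancel₀ hLne hzz
  refine ⟨slp w (pt w D J) (step w D (pt w D J)), D, fun i => pt w D (J + i),
    (hsig J).1, (hsig J).2, ?_, ?_, ?_⟩
  · apply strictMono_nat_of_lt_succ
    intro i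
    show pt w D (J + i) < pt w D (J + (i + 1))
    have : J + (i + 1) = (J + i) + 1 := by omega
    rw [this]
    show pt w D (J + i) < pt w D (J + i) + step w D (pt w D (J + i))
    have := step_pos w D (pt w D (J + i))
    omega
  · intro i
    have : J + (i + 1) = (J + i) + 1 := by omega
    simp only [this]
    show pt w D (J + i) + step w D (pt w D (J + i)) - pt w D (J + i) ≤ D
    have := hstep_lt (pt w D (J + i))
    omega
  · intro i
    have heq : J + (i + 1) = (J + i) + 1 := by omega
    simp only [heq]
    have hgap : pt w D ((J + i) + 1) - pt w D (J + i) = step w D (pt w D (J + i)) := by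
      show pt w D (J + i) + step w D (pt w D (J + i)) - pt w D (J + i) = _
      omega
    have hgapq : ((pt w D ((J + i) + 1) : ℕ) : ℚ) - ((pt w D (J + i) : ℕ) : ℚ)
        = ((step w D (pt w D (J + i)) : ℕ) : ℚ) := by
      show ((pt w D (J + i) + step w D (pt w D (J + i)) : ℕ) : ℚ) - _ = _
      push_cast
      ring
    rw [hgap, hgapq]
    exact hsconst (J + i) (by omega)
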